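/- arXiv:2204.11423 — 10 statements merged into one kernel-verified Lean document; each statement's English description precedes it below -/
import Mathlib

section
/- Let M¹ = (b¹, u¹) and M² = (b², u²) be subjective opinions over K classes whose conflict C satisfies C < 1. Then their reduced Dempster combination (b, u) is again a subjective opinion: b k ≥ 0 for every k, u ≥ 0, and u + ∑_k b k = 1. -/
open Finset

/-- The conflict between two belief-mass assignments: `C = ∑_{i ≠ j} b₁ i * b₂ j`. -/
noncomputable def conflict {K : ℕ} (b₁ b₂ : Fin K → ℝ) : ℝ :=
  ∑ i, ∑ j ∈ univ.filter (fun j => j ≠ i), b₁ i * b₂ j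

/-- The belief masses of the reduced Dempster combination:
`b k = (b¹ k * b² k + b¹ k * u² + b² k * u¹) / (1 − C)`. -/
noncomputable def combBelief {K : ℕ} (b₁ b₂ : Fin K → ℝ) (u₁ u₂ : ℝ) (k : Fin K) : ℝ :=
  (b₁ k * b₂ k + b₁ k * u₂ + b₂ k * u₁) / (1 - conflict b₁ b₂)

/-- The uncertainty mass of the reduced Dempster combination: `u = u¹ * u² / (1 − C)`. -/
noncomputable def combUncertainty {K : ℕ} (b₁ b₂ : Fin K → ℝ) (u₁ u₂ : ℝ) : ℝ :=
  (u₁ * u₂) / (1 - conflict b₁ b₂)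

/-- the reduced Dempster combination of two subjective opinions with
conflict `C < 1` is again a subjective opinion. -/
theorem comb_isOpinion (K : ℕ) (hK : 1 ≤ K)
    (b₁ b₂ : Fin K → ℝ) (u₁ u₂ : ℝ)
    (hb₁ : ∀ k, 0 ≤ b₁ k) (hu₁ : 0 ≤ u₁) (hs₁ : u₁ + ∑ k, b₁ k = 1)
    (hb₂ : ∀ k, 0 ≤ b₂ k) (hu₂ : 0 ≤ u₂) (hs₂ : u₂ + ∑ k, b₂ k = 1)
    (hC : conflict b₁ b₂ < 1) :
    (∀ k, 0 ≤ combBelief b₁ b₂ u₁ u₂ k) ∧ 0 ≤ combUncertainty b₁ b₂ u₁ u₂ ∧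
      combUncertainty b₁ b₂ u₁ u₂ + ∑ k, combBelief b₁ b₂ u₁ u₂ k = 1 := by
  have hd : 0 < 1 - conflict b₁ b₂ := by linarith
  have key : conflict b₁ b₂ = (∑ k, b₁ k) * (∑ k, b₂ k) - ∑ k, b₁ k * b₂ k := by
    unfold conflict
    have he : ∀ i : Fin K, (univ.filter (fun j => j ≠ i)) = univ.erase i := by
      intro i; ext j; simp [Finset.mem_erase]
    simp_rw [he, ← mul_sum, Finset.sum_erase_eq_sub (mem_univ _), mul_sub,
      Finset.sum_sub_distrib, ← Finset.sum_mul]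
  have hnum : u₁ * u₂ + ∑ k, (b₁ k * b₂ k + b₁ k * u₂ + b₂ k * u₁)
      = 1 - conflict b₁ b₂ := by
    rw [key]
    simp only [Finset.sum_add_distrib, ← Finset.sum_mul]
    nlinarith [hs₁, hs₂]
  refine ⟨fun k => ?_, ?_, ?_⟩
  · exact div_nonneg (add_nonneg (add_nonneg (mul_nonneg (hb₁ k) (hb₂ k))
      (mul_nonneg (hb₁ k) hu₂)) (mul_nonneg (hb₂ k) hu₁)) hd.le
  · exact div_nonneg (mul_nonneg hu₁ hu₂) hd.le
  · unfold combBelief combUncertainty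
    rw [← Finset.sum_div, ← add_div, hnum, div_self hd.ne']
end

section
/- (Proposition 3.1) Let Mᵒ = (bᵒ, uᵒ) and Mᵃ = (bᵃ, uᵃ) be subjective opinions over K classes whose conflict C satisfies C < 1, and let (b, u) be their reduced Dempster combination. Fix an index t : Fin K (the ground-truth class). If bᵃ t ≥ bᵒ k for every k (i.e. bᵃ t is at least the largest belief mass of Mᵒ), then b t ≥ bᵒ t: integrating the opinion Mᵃ does not decrease the belief assigned to the ground-truth class. -/
open Finset

/-- Proposition 3.1: if the additional opinion's belief in the ground-truth
class `t` is at least the largest belief mass of the original opinion, then combining does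
not decrease the belief in `t`. -/
theorem comb_belief_ge_of_additional_strong (K : ℕ) (hK : 1 ≤ K)
    (bo ba : Fin K → ℝ) (uo ua : ℝ)
    (hbo : ∀ k, 0 ≤ bo k) (huo : 0 ≤ uo) (hso : uo + ∑ k, bo k = 1)
    (hba : ∀ k, 0 ≤ ba k) (hua : 0 ≤ ua) (hsa : ua + ∑ k, ba k = 1)
    (hC : conflict bo ba < 1)
    (t : Fin K) (ht : ∀ k, bo k ≤ ba t) :
    bo t ≤ combBelief bo ba uo ua t := by
  have key : conflict bo ba = (∑ i, bo i) * (∑ j, ba j) - ∑ k, bo k * ba k := by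
    unfold conflict
    have : ∀ i : Fin K, ∑ j ∈ univ.filter (fun j => j ≠ i), bo i * ba j
        = bo i * (∑ j, ba j) - bo i * ba i := by
      intro i
      rw [Finset.filter_ne', Finset.sum_erase_eq_sub (Finset.mem_univ i), ← Finset.mul_sum]
    simp only [this, Finset.sum_sub_distrib, ← Finset.sum_mul]
  have hS : ∑ k, bo k * ba k ≤ ba t * (∑ k, ba k) := by
    rw [Finset.mul_sum]
    exact Finset.sum_le_sum fun k _ => mul_le_mul_of_nonneg_right (ht k) (hba k)
  have hpos : 0 < 1 - conflict bo ba := by linarith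
  rw [combBelief, le_div_iff₀ hpos]
  have hsum : (∑ k, bo k) = 1 - uo := by linarith
  have hsum2 : (∑ k, ba k) = 1 - ua := by linarith
  rw [hsum2] at hS
  rw [key, hsum, hsum2]
  nlinarith [mul_nonneg (mul_nonneg (hbo t) huo) hua,
    mul_le_mul_of_nonneg_right (ht t) huo, mul_le_mul_of_nonneg_left hS (hbo t),
    mul_nonneg (mul_nonneg (hbo t) (hba t)) hua]
end

section
/- (Proposition 3.2, main bound) Let Mᵒ = (bᵒ, uᵒ) and Mᵃ = (bᵃ, uᵃ) be subjective opinions over K classes whose conflict C satisfies C < 1, let (b, u) be their reduced Dempster combination, and fix t : Fin K. Then bᵒ t − b t ≤ bᵒ t * (1 − uᵃ) * (1 + uᵒ) / (1 + uᵒ − uᵃ * uᵒ). (When uᵃ < 1 this upper bound equals bᵒ t * (1 + uᵒ) / (1/(1 − uᵃ) + uᵒ).) -/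
open Finset

/-- Proposition 3.2, main bound: the possible degradation of the belief in
class `t` caused by integrating the additional opinion is bounded by
`bᵒ t * (1 − uᵃ) * (1 + uᵒ) / (1 + uᵒ − uᵃ * uᵒ)`. -/
theorem comb_belief_degradation_bound (K : ℕ) (hK : 1 ≤ K)
    (bo ba : Fin K → ℝ) (uo ua : ℝ)
    (hbo : ∀ k, 0 ≤ bo k) (huo : 0 ≤ uo) (hso : uo + ∑ k, bo k = 1)
    (hba : ∀ k, 0 ≤ ba k) (hua : 0 ≤ ua) (hsa : ua + ∑ k, ba k = 1)
    (hC : conflict bo ba < 1) (t : Fin K) :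
    bo t - combBelief bo ba uo ua t ≤
      bo t * (1 - ua) * (1 + uo) / (1 + uo - ua * uo) := by
  have key : conflict bo ba + ∑ i, bo i * ba i = (∑ i, bo i) * (∑ j, ba j) := by
    unfold conflict
    rw [← Finset.sum_add_distrib, Finset.sum_mul]
    refine Finset.sum_congr rfl fun i _ => ?_
    rw [Finset.mul_sum, Finset.filter_ne', Finset.sum_erase_add _ _ (Finset.mem_univ i)]
  have hC' : (0:ℝ) < 1 - conflict bo ba := by linarith
  have hsba : ∑ k, ba k = 1 - ua := by linarith
  have hsbo : ∑ k, bo k = 1 - uo := by linarith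
  have hua1 : ua ≤ 1 := by
    have : 0 ≤ ∑ k, ba k := Finset.sum_nonneg fun k _ => hba k
    linarith
  have hD : (0:ℝ) < 1 + uo - ua * uo := by nlinarith
  have hbole : ∀ i, bo i ≤ 1 := by
    intro i
    have := Finset.single_le_sum (fun k (_ : k ∈ Finset.univ) => hbo k) (Finset.mem_univ i)
    have : 0 ≤ uo := huo
    linarith [Finset.single_le_sum (fun k (_ : k ∈ Finset.univ) => hbo k) (Finset.mem_univ i)]
  have hsum_le : ∑ i, bo i * ba i ≤ ∑ i, ba i := by
    refine Finset.sum_le_sum fun i _ => ?_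
    nlinarith [hbole i, hba i]
  have hleC : 1 - conflict bo ba ≤ 1 + uo - ua * uo := by
    have hCval : 1 - conflict bo ba =
        uo * ua + uo * (1 - ua) + ua * (1 - uo) + ∑ i, bo i * ba i := by
      have h1 : (uo + ∑ k, bo k) * (ua + ∑ k, ba k) = 1 := by rw [hso, hsa]; ring
      nlinarith [key]
    rw [hCval]
    have := hsum_le
    rw [hsba] at this
    nlinarith
  rw [combBelief, sub_le_iff_le_add,
    div_add_div _ _ (ne_of_gt hD) (ne_of_gt hC'), le_div_iff₀ (by positivity)]
  have hNge : bo t * ua ≤ bo t * ba t + bo t * ua + ba t * uo := by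
    nlinarith [mul_nonneg (hbo t) (hba t), mul_nonneg (hba t) huo]
  nlinarith [mul_le_mul_of_nonneg_left hleC (mul_nonneg (hbo t) hua),
    mul_le_mul_of_nonneg_right hNge (le_of_lt hD)]
end

section
/- (Proposition 3.2, intermediate bound) Let Mᵒ = (bᵒ, uᵒ) and Mᵃ = (bᵃ, uᵃ) be subjective opinions over K classes whose conflict C satisfies C < 1, let (b, u) be their reduced Dempster combination, fix t : Fin K, and let bₘᵃ be the maximum of bᵃ k over k : Fin K. Then bᵒ t − b t ≤ bᵒ t − bᵒ t * uᵃ / (bₘᵃ + uᵃ + uᵒ − uᵃ * uᵒ), provided bₘᵃ + uᵃ + uᵒ − uᵃ * uᵒ > 0. -/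
open Finset

/-- Proposition 3.2, intermediate bound: with `bm` the maximum belief mass of
the additional opinion, `bᵒ t − b t ≤ bᵒ t − bᵒ t * uᵃ / (bm + uᵃ + uᵒ − uᵃ * uᵒ)`. -/
theorem comb_belief_degradation_intermediate_bound (K : ℕ) (hK : 1 ≤ K)
    (bo ba : Fin K → ℝ) (uo ua : ℝ)
    (hbo : ∀ k, 0 ≤ bo k) (huo : 0 ≤ uo) (hso : uo + ∑ k, bo k = 1)
    (hba : ∀ k, 0 ≤ ba k) (hua : 0 ≤ ua) (hsa : ua + ∑ k, ba k = 1)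
    (hC : conflict bo ba < 1) (t : Fin K)
    (bm : ℝ) (hbm : IsGreatest (Set.range ba) bm)
    (hpos : 0 < bm + ua + uo - ua * uo) :
    bo t - combBelief bo ba uo ua t ≤
      bo t - bo t * ua / (bm + ua + uo - ua * uo) := by
  have hbm0 : 0 ≤ bm := le_trans (hba t) (hbm.2 ⟨t, rfl⟩)
  have hCeq : conflict bo ba = (∑ k, bo k) * (∑ k, ba k) - ∑ k, bo k * ba k := by
    unfold conflict
    have : ∀ i : Fin K, ∑ j ∈ univ.filter (fun j => j ≠ i), bo i * ba j
        = bo i * (∑ j, ba j) - bo i * ba i := by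
      intro i
      rw [← Finset.mul_sum, Finset.filter_ne', Finset.sum_erase_eq_sub (mem_univ i),
        mul_sub]
    simp_rw [this]
    rw [Finset.sum_sub_distrib, ← Finset.sum_mul]
  have hdot : ∑ k, bo k * ba k ≤ bm * (1 - uo) := by
    calc ∑ k, bo k * ba k ≤ ∑ k, bo k * bm := by
          apply Finset.sum_le_sum
          intro k _
          exact mul_le_mul_of_nonneg_left (hbm.2 ⟨k, rfl⟩) (hbo k)
      _ = bm * (1 - uo) := by rw [← Finset.sum_mul]; nlinarith [hso]
  have hkey : 1 - conflict bo ba ≤ bm + ua + uo - ua * uo := by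
    rw [hCeq]
    nlinarith [hso, hsa, hdot, mul_nonneg hbm0 huo]
  have hC' : 0 < 1 - conflict bo ba := by linarith
  have hmain : bo t * ua / (bm + ua + uo - ua * uo) ≤ combBelief bo ba uo ua t := by
    unfold combBelief
    apply div_le_div₀
    · have := mul_nonneg (hbo t) (hba t)
      have := mul_nonneg (hbo t) hua
      have := mul_nonneg (hba t) huo
      linarith
    · have := mul_nonneg (hbo t) (hba t)
      have := mul_nonneg (hba t) huo
      linarith
    · exact hC'
    · exact hkey
  linarith
end

section
/- (Proposition 3.3) Let Mᵒ = (bᵒ, uᵒ) and Mᵃ = (bᵃ, uᵃ) be subjective opinions over K classes whose conflict C satisfies C < 1, and let (b, u) be their reduced Dempster combination. Then u ≤ uᵒ: integrating another opinion does not increase the uncertainty mass. -/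
open Finset

/-- Proposition 3.3: integrating another opinion does not increase the
uncertainty mass: `u ≤ uᵒ`. -/
theorem comb_uncertainty_le (K : ℕ) (hK : 1 ≤ K)
    (bo ba : Fin K → ℝ) (uo ua : ℝ)
    (hbo : ∀ k, 0 ≤ bo k) (huo : 0 ≤ uo) (hso : uo + ∑ k, bo k = 1)
    (hba : ∀ k, 0 ≤ ba k) (hua : 0 ≤ ua) (hsa : ua + ∑ k, ba k = 1)
    (hC : conflict bo ba < 1) :
    combUncertainty bo ba uo ua ≤ uo := by
  have hCle : conflict bo ba ≤ ∑ j, ba j := by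
    have h1 : conflict bo ba ≤ ∑ i, bo i * ∑ j, ba j := by
      unfold conflict
      apply Finset.sum_le_sum
      intro i _
      rw [← Finset.mul_sum]
      apply mul_le_mul_of_nonneg_left _ (hbo i)
      exact Finset.sum_le_sum_of_subset_of_nonneg (Finset.filter_subset _ _)
        (fun j _ _ => hba j)
    have h2 : ∑ i, bo i * ∑ j, ba j = (∑ i, bo i) * ∑ j, ba j := by
      rw [← Finset.sum_mul]
    have hso' : ∑ i, bo i ≤ 1 := by linarith
    have hsa' : 0 ≤ ∑ j, ba j := Finset.sum_nonneg (fun j _ => hba j)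
    calc conflict bo ba ≤ (∑ i, bo i) * ∑ j, ba j := by rw [← h2]; exact h1
      _ ≤ 1 * ∑ j, ba j := mul_le_mul_of_nonneg_right hso' hsa'
      _ = ∑ j, ba j := one_mul _
  have hpos : 0 < 1 - conflict bo ba := by linarith
  rw [combUncertainty, div_le_iff₀ hpos]
  have : ua ≤ 1 - conflict bo ba := by linarith
  calc uo * ua ≤ uo * (1 - conflict bo ba) := mul_le_mul_of_nonneg_left this huo
    _ = uo * (1 - conflict bo ba) := rfl
end

section
/- (Proposition 3.3, sharper intermediate bound) Let Mᵒ = (bᵒ, uᵒ) and Mᵃ = (bᵃ, uᵃ) be subjective opinions over K classes whose conflict C satisfies C < 1, let (b, u) be their reduced Dempster combination, and assume uᵃ + uᵒ − uᵒ * uᵃ > 0. Then u ≤ uᵒ * uᵃ / (uᵃ + uᵒ − uᵒ * uᵃ). -/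
open Finset

lemma conflict_eq {K : ℕ} (b₁ b₂ : Fin K → ℝ) :
    conflict b₁ b₂ = (∑ i, b₁ i) * (∑ j, b₂ j) - ∑ i, b₁ i * b₂ i := by
  unfold conflict
  rw [sum_mul]
  rw [← Finset.sum_sub_distrib]
  congr 1
  ext i
  rw [← mul_sum]
  have : ∑ j ∈ univ.filter (fun j => j ≠ i), b₂ j = (∑ j, b₂ j) - b₂ i := by
    rw [Finset.filter_ne', Finset.sum_erase_eq_sub (mem_univ i)]
  rw [this]
  ring

/-- Proposition 3.3, sharper intermediate bound:
`u ≤ uᵒ * uᵃ / (uᵃ + uᵒ − uᵒ * uᵃ)`. -/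
theorem comb_uncertainty_sharper_bound (K : ℕ) (hK : 1 ≤ K)
    (bo ba : Fin K → ℝ) (uo ua : ℝ)
    (hbo : ∀ k, 0 ≤ bo k) (huo : 0 ≤ uo) (hso : uo + ∑ k, bo k = 1)
    (hba : ∀ k, 0 ≤ ba k) (hua : 0 ≤ ua) (hsa : ua + ∑ k, ba k = 1)
    (hC : conflict bo ba < 1)
    (hpos : 0 < ua + uo - uo * ua) :
    combUncertainty bo ba uo ua ≤ uo * ua / (ua + uo - uo * ua) := by
  have hdiag : 0 ≤ ∑ i, bo i * ba i :=
    Finset.sum_nonneg fun i _ => mul_nonneg (hbo i) (hba i)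
  have hden : ua + uo - uo * ua ≤ 1 - conflict bo ba := by
    have hbo' : ∑ k, bo k = 1 - uo := by linarith
    have hba' : ∑ k, ba k = 1 - ua := by linarith
    rw [conflict_eq, hbo', hba']
    nlinarith
  unfold combUncertainty
  gcongr
end

section
/- (Proposition 3.4, reciprocal identity) Let Mᵒ = (bᵒ, uᵒ) and Mᵃ = (bᵃ, uᵃ) be subjective opinions over K classes with uᵒ > 0 and uᵃ > 0. Then the conflict C satisfies C < 1, and the uncertainty u of the reduced Dempster combination satisfies u = 1 / (∑_k (bᵃ k * bᵒ k / (uᵃ * uᵒ) + bᵃ k / uᵃ + bᵒ k / uᵒ) + 1). -/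
open Finset

/-- Proposition 3.4, reciprocal identity: for opinions with strictly positive
uncertainties the conflict is `< 1` and the combined uncertainty satisfies
`u = 1 / (∑_k (bᵃ k * bᵒ k / (uᵃ * uᵒ) + bᵃ k / uᵃ + bᵒ k / uᵒ) + 1)`. -/
theorem comb_uncertainty_reciprocal (K : ℕ) (hK : 1 ≤ K)
    (bo ba : Fin K → ℝ) (uo ua : ℝ)
    (hbo : ∀ k, 0 ≤ bo k) (huo : 0 < uo) (hso : uo + ∑ k, bo k = 1)
    (hba : ∀ k, 0 ≤ ba k) (hua : 0 < ua) (hsa : ua + ∑ k, ba k = 1) :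
    conflict bo ba < 1 ∧
      combUncertainty bo ba uo ua =
        1 / ((∑ k, (ba k * bo k / (ua * uo) + ba k / ua + bo k / uo)) + 1) := by
  have hC : conflict bo ba = (∑ k, bo k) * (∑ k, ba k) - ∑ k, bo k * ba k := by
    unfold conflict
    have h1 : ∀ i : Fin K, ∑ j ∈ univ.filter (fun j => j ≠ i), bo i * ba j
        = bo i * (∑ j, ba j) - bo i * ba i := by
      intro i
      rw [← Finset.mul_sum, Finset.filter_ne', Finset.sum_erase_eq_sub (Finset.mem_univ i),
        mul_sub]
    simp only [h1, Finset.sum_sub_distrib, ← Finset.sum_mul]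
  have hS : 0 ≤ ∑ k, bo k * ba k :=
    Finset.sum_nonneg fun k _ => mul_nonneg (hbo k) (hba k)
  have hbos : ∑ k, bo k = 1 - uo := by linarith
  have hbas : ∑ k, ba k = 1 - ua := by linarith
  have h1C : 1 - conflict bo ba = (∑ k, bo k * ba k) + uo + ua - uo * ua := by
    rw [hC, hbos, hbas]; ring
  have h1 : 0 ≤ ∑ k, bo k := Finset.sum_nonneg fun k _ => hbo k
  have h2 : 0 ≤ ∑ k, ba k := Finset.sum_nonneg fun k _ => hba k
  have hpos : 0 < 1 - conflict bo ba := by nlinarith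
  constructor
  · linarith
  · unfold combUncertainty
    have hden : (∑ k, (ba k * bo k / (ua * uo) + ba k / ua + bo k / uo)) + 1
        = (1 - conflict bo ba) / (uo * ua) := by
      have : ∀ k, ba k * bo k / (ua * uo) + ba k / ua + bo k / uo
          = (bo k * ba k) * (uo * ua)⁻¹ + ba k * ua⁻¹ + bo k * uo⁻¹ := by
        intro k
        field_simp
      simp only [this, Finset.sum_add_distrib, ← Finset.sum_mul]
      rw [hbos, hbas, h1C]
      field_simp
      ring
    rw [hden, one_div_div]
end

section
/- (Proposition 3.3, generalization to multiple opinions) Let M¹, …, Mᴹ (with M ≥ 1) be subjective opinions over K classes, and form the iterated reduced Dempster combination M = (…((M¹ ⊕ M²) ⊕ M³) ⊕ …) ⊕ Mᴹ, assuming that at each of the M − 1 combination steps the conflict of the two opinions being combined is strictly less than 1. Then the uncertainty u of M satisfies u ≤ uᵐ for every m ∈ {1, …, M}, where uᵐ is the uncertainty of Mᵐ. -/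
open Finset

/-- An opinion datum over `K` classes: a pair (belief masses, uncertainty mass). -/
abbrev Opinion (K : ℕ) := (Fin K → ℝ) × ℝ

/-- The reduced Dempster combination `M¹ ⊕ M²`. -/
noncomputable def comb {K : ℕ} (M₁ M₂ : Opinion K) : Opinion K :=
  (fun k => (M₁.1 k * M₂.1 k + M₁.1 k * M₂.2 + M₂.1 k * M₁.2) / (1 - conflict M₁.1 M₂.1),
    (M₁.2 * M₂.2) / (1 - conflict M₁.1 M₂.1))

/-- The iterated (left-associated) combination `(⋯((M¹ ⊕ M²) ⊕ M³) ⊕ ⋯) ⊕ Mᴹ`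
of `M = n + 1` opinions. -/
noncomputable def iterComb {K : ℕ} : (n : ℕ) → (Fin (n + 1) → Opinion K) → Opinion K
  | 0, f => f 0
  | n + 1, f => comb (iterComb n (fun i => f i.castSucc)) (f (Fin.last (n + 1)))

lemma step {K : ℕ} (M₁ M₂ : Opinion K)
    (hb₁ : ∀ k, 0 ≤ M₁.1 k) (hu₁ : 0 ≤ M₁.2) (hs₁ : M₁.2 + ∑ k, M₁.1 k = 1)
    (hb₂ : ∀ k, 0 ≤ M₂.1 k) (hu₂ : 0 ≤ M₂.2) (hs₂ : M₂.2 + ∑ k, M₂.1 k = 1)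
    (hC : conflict M₁.1 M₂.1 < 1) :
    (∀ k, 0 ≤ (comb M₁ M₂).1 k) ∧ 0 ≤ (comb M₁ M₂).2 ∧
      ((comb M₁ M₂).2 + ∑ k, (comb M₁ M₂).1 k = 1) ∧
      (comb M₁ M₂).2 ≤ M₁.2 ∧ (comb M₁ M₂).2 ≤ M₂.2 := by
  have hpos : 0 < 1 - conflict M₁.1 M₂.1 := by linarith
  have hprod : 0 ≤ ∑ k, M₁.1 k * M₂.1 k :=
    Finset.sum_nonneg fun k _ => mul_nonneg (hb₁ k) (hb₂ k)
  have hs₁' : ∑ k, M₁.1 k = 1 - M₁.2 := by linarith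
  have hs₂' : ∑ k, M₂.1 k = 1 - M₂.2 := by linarith
  have hsb₁ : (0:ℝ) ≤ 1 - M₁.2 := hs₁' ▸ Finset.sum_nonneg fun k _ => hb₁ k
  have hsb₂ : (0:ℝ) ≤ 1 - M₂.2 := hs₂' ▸ Finset.sum_nonneg fun k _ => hb₂ k
  have hCeq : 1 - conflict M₁.1 M₂.1
      = M₁.2 + M₂.2 - M₁.2 * M₂.2 + ∑ k, M₁.1 k * M₂.1 k := by
    rw [conflict_eq, hs₁', hs₂']; ring
  refine ⟨fun k => div_nonneg (add_nonneg (add_nonneg (mul_nonneg (hb₁ k) (hb₂ k))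
      (mul_nonneg (hb₁ k) hu₂)) (mul_nonneg (hb₂ k) hu₁)) hpos.le,
    div_nonneg (mul_nonneg hu₁ hu₂) hpos.le, ?_, ?_, ?_⟩
  · rw [comb]
    simp only
    rw [← Finset.sum_div, ← add_div, div_eq_one_iff_eq hpos.ne']
    rw [Finset.sum_add_distrib, Finset.sum_add_distrib, ← Finset.sum_mul, ← Finset.sum_mul,
      hs₁', hs₂', hCeq]
    ring
  · rw [comb]
    simp only
    rw [div_le_iff₀ hpos, hCeq]
    nlinarith [mul_nonneg hu₁ hprod, mul_nonneg (mul_nonneg hu₁ hu₁) hsb₂]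
  · rw [comb]
    simp only
    rw [div_le_iff₀ hpos, hCeq]
    nlinarith [mul_nonneg hu₂ hprod, mul_nonneg (mul_nonneg hu₂ hu₂) hsb₁]

lemma main_ind {K : ℕ} : ∀ (n : ℕ) (f : Fin (n + 1) → Opinion K),
    (∀ m, ∀ k, 0 ≤ (f m).1 k) → (∀ m, 0 ≤ (f m).2) →
    (∀ m, (f m).2 + ∑ k, (f m).1 k = 1) →
    (∀ m : ℕ, (hm : m < n) →
      conflict (iterComb m (fun i => f (Fin.castLE (by omega) i))).1
        (f ⟨m + 1, by omega⟩).1 < 1) →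
    (∀ k, 0 ≤ (iterComb n f).1 k) ∧ 0 ≤ (iterComb n f).2 ∧
      ((iterComb n f).2 + ∑ k, (iterComb n f).1 k = 1) ∧
      ∀ m, (iterComb n f).2 ≤ (f m).2 := by
  intro n
  induction n with
  | zero =>
    intro f hb hu hsum _
    refine ⟨hb 0, hu 0, hsum 0, fun m => ?_⟩
    have : m = 0 := Fin.ext (by omega)
    subst this
    exact le_refl _
  | succ n ih =>
    intro f hb hu hsum hconf
    set g : Fin (n + 1) → Opinion K := fun i => f i.castSucc with hg
    have hgf : ∀ (m : ℕ) (hm : m ≤ n) (h1 : m + 1 ≤ n + 1) (h2 : m + 1 ≤ n + 2),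
        (fun i : Fin (m + 1) => g (Fin.castLE h1 i))
          = (fun i : Fin (m + 1) => f (Fin.castLE h2 i)) :=
      fun m hm h1 h2 => funext fun i => congrArg f (Fin.ext rfl)
    obtain ⟨hb', hu', hsum', hle'⟩ := ih g (fun m k => hb _ k) (fun m => hu _)
      (fun m => hsum _) (by
        intro m hm
        rw [hgf m (by omega) (by omega) (by omega)]
        have h2 : g ⟨m + 1, by omega⟩ = f ⟨m + 1, by omega⟩ := congrArg f (Fin.ext rfl)
        rw [h2]
        exact hconf m (by omega))
    have heqg : g = fun i : Fin (n + 1) => f (Fin.castLE (by omega) i) :=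
      funext fun i => congrArg f (Fin.ext rfl)
    have hC : conflict (iterComb n g).1 (f (Fin.last (n + 1))).1 < 1 := by
      have h := hconf n (by omega)
      have hlast : f (Fin.last (n + 1)) = f ⟨n + 1, by omega⟩ := congrArg f (Fin.ext rfl)
      rw [hlast, heqg]
      exact h
    have hiter : iterComb (n + 1) f = comb (iterComb n g) (f (Fin.last (n + 1))) := rfl
    obtain ⟨c1, c2, c3, c4, c5⟩ := step (iterComb n g) (f (Fin.last (n + 1)))
      hb' hu' hsum' (hb _) (hu _) (hsum _) hC
    rw [hiter]
    refine ⟨c1, c2, c3, fun m => ?_⟩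
    refine Fin.lastCases ?_ ?_ m
    · exact c5
    · intro i
      exact le_trans c4 (hle' i)

/-- Proposition 3.3, generalization to multiple opinions: if at each of the
combination steps the conflict of the two opinions being combined is `< 1`, then the
uncertainty of the iterated combination is at most the uncertainty of every single opinion. -/
theorem iterComb_uncertainty_le (K n : ℕ) (hK : 1 ≤ K)
    (f : Fin (n + 1) → Opinion K)
    (hb : ∀ m, ∀ k, 0 ≤ (f m).1 k) (hu : ∀ m, 0 ≤ (f m).2)
    (hsum : ∀ m, (f m).2 + ∑ k, (f m).1 k = 1)
    (hconf : ∀ m : ℕ, (hm : m < n) →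
      conflict (iterComb m (fun i => f (Fin.castLE (by omega) i))).1
        (f ⟨m + 1, by omega⟩).1 < 1) :
    ∀ m, (iterComb n f).2 ≤ (f m).2 := by
  exact (main_ind n f hb hu hsum hconf).2.2.2
end

section
/- (Associativity of the reduced Dempster combination, implicit in the multi-view fusion M = M¹ ⊕ M² ⊕ ⋯ ⊕ Mⱽ) Let M¹, M², M³ be subjective opinions over K classes. Assume that the conflict of M¹ with M² is < 1, the conflict of (M¹ ⊕ M²) with M³ is < 1, the conflict of M² with M³ is < 1, and the conflict of M¹ with (M² ⊕ M³) is < 1. Then (M¹ ⊕ M²) ⊕ M³ = M¹ ⊕ (M² ⊕ M³), i.e. the combined belief masses and the combined uncertainty of the two triple fusions coincide. -/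
open Finset

/-- associativity of the reduced Dempster combination, under the conditions
that all the intermediate conflicts are `< 1`. -/
theorem comb_assoc (K : ℕ) (hK : 1 ≤ K) (M₁ M₂ M₃ : Opinion K)
    (hb₁ : ∀ k, 0 ≤ M₁.1 k) (hu₁ : 0 ≤ M₁.2) (hs₁ : M₁.2 + ∑ k, M₁.1 k = 1)
    (hb₂ : ∀ k, 0 ≤ M₂.1 k) (hu₂ : 0 ≤ M₂.2) (hs₂ : M₂.2 + ∑ k, M₂.1 k = 1)
    (hb₃ : ∀ k, 0 ≤ M₃.1 k) (hu₃ : 0 ≤ M₃.2) (hs₃ : M₃.2 + ∑ k, M₃.1 k = 1)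
    (hC₁₂ : conflict M₁.1 M₂.1 < 1)
    (hC₁₂₃ : conflict (comb M₁ M₂).1 M₃.1 < 1)
    (hC₂₃ : conflict M₂.1 M₃.1 < 1)
    (hC₁₂₃' : conflict M₁.1 (comb M₂ M₃).1 < 1) :
    comb (comb M₁ M₂) M₃ = comb M₁ (comb M₂ M₃) := by
  obtain ⟨a, u⟩ := M₁
  obtain ⟨b, v⟩ := M₂
  obtain ⟨c, w⟩ := M₃
  simp only [comb] at *
  set P := ∑ k, a k * b k with hP
  set Q := ∑ k, b k * c k with hQ
  set R := ∑ k, a k * c k with hR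
  set T := ∑ k, a k * (b k * c k) with hT
  have hA : ∑ k, a k = 1 - u := by linarith
  have hB : ∑ k, b k = 1 - v := by linarith
  have hC : ∑ k, c k = 1 - w := by linarith
  have hc12 : conflict a b = (1 - u) * (1 - v) - P := by rw [conflict_eq, hA, hB]
  have hc23 : conflict b c = (1 - v) * (1 - w) - Q := by rw [conflict_eq, hB, hC]
  have hs12 : (1 : ℝ) - conflict a b ≠ 0 := by linarith
  have hs23 : (1 : ℝ) - conflict b c ≠ 0 := by linarith
  have hSN : ∑ k, (a k * b k + a k * v + b k * u) = P + v * (1 - u) + u * (1 - v) := by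
    rw [Finset.sum_add_distrib, Finset.sum_add_distrib, ← Finset.sum_mul, ← Finset.sum_mul,
      hA, hB]; ring
  have hSN' : ∑ k, (b k * c k + b k * w + c k * v) = Q + w * (1 - v) + v * (1 - w) := by
    rw [Finset.sum_add_distrib, Finset.sum_add_distrib, ← Finset.sum_mul, ← Finset.sum_mul,
      hB, hC]; ring
  have hSNc : ∑ k, (a k * b k + a k * v + b k * u) * c k = T + v * R + u * Q := by
    have h1 : ∀ k : Fin K, (a k * b k + a k * v + b k * u) * c k
        = a k * (b k * c k) + (a k * c k) * v + (b k * c k) * u := fun k => by ring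
    simp_rw [h1]
    rw [Finset.sum_add_distrib, Finset.sum_add_distrib, ← Finset.sum_mul, ← Finset.sum_mul,
      ← hT, ← hR, ← hQ]; ring
  have hSaN : ∑ k, a k * (b k * c k + b k * w + c k * v) = T + w * P + v * R := by
    have h1 : ∀ k : Fin K, a k * (b k * c k + b k * w + c k * v)
        = a k * (b k * c k) + (a k * b k) * w + (a k * c k) * v := fun k => by ring
    simp_rw [h1]
    rw [Finset.sum_add_distrib, Finset.sum_add_distrib, ← Finset.sum_mul, ← Finset.sum_mul,
      ← hT, ← hP, ← hR]; ring
  set E := T + w * P + v * R + u * Q + v * w + u * w + u * v - 2 * (u * v * w) with hE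
  have hcL : (1 - conflict (fun k => (a k * b k + a k * v + b k * u) / (1 - conflict a b)) c)
      * (1 - conflict a b) = E := by
    rw [conflict_eq, ← Finset.sum_div]
    simp_rw [div_mul_eq_mul_div]
    rw [← Finset.sum_div, hSN, hSNc, hC, div_sub_div_same, sub_mul, one_mul,
      div_mul_cancel₀ _ hs12, hc12, hE]; ring
  have hcR : (1 - conflict a (fun k => (b k * c k + b k * w + c k * v) / (1 - conflict b c)))
      * (1 - conflict b c) = E := by
    rw [conflict_eq, ← Finset.sum_div]
    simp_rw [mul_div_assoc']
    rw [← Finset.sum_div, hSN', hSaN, hA, div_sub_div_same, sub_mul, one_mul,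
      div_mul_cancel₀ _ hs23, hc23, hE]; ring
  have hL : (1 : ℝ)
      - conflict (fun k => (a k * b k + a k * v + b k * u) / (1 - conflict a b)) c ≠ 0 := by
    linarith
  have hR' : (1 : ℝ)
      - conflict a (fun k => (b k * c k + b k * w + c k * v) / (1 - conflict b c)) ≠ 0 := by
    linarith
  rw [Prod.ext_iff]
  constructor
  · funext k
    simp only
    rw [div_eq_div_iff hL hR']
    generalize conflict (fun k => (a k * b k + a k * v + b k * u) / (1 - conflict a b)) c = X at hcL ⊢
    generalize conflict a (fun k => (b k * c k + b k * w + c k * v) / (1 - conflict b c)) = Y at hcR ⊢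
    field_simp
    linear_combination ((a k * b k + a k * v + b k * u) * c k
        + (a k * b k + a k * v + b k * u) * w + c k * (u * v)) * hcR
      - (a k * (b k * c k + b k * w + c k * v) + a k * (v * w)
        + (b k * c k + b k * w + c k * v) * u) * hcL
  · simp only
    rw [div_eq_div_iff hL hR']
    generalize conflict (fun k => (a k * b k + a k * v + b k * u) / (1 - conflict a b)) c = X at hcL ⊢
    generalize conflict a (fun k => (b k * c k + b k * w + c k * v) / (1 - conflict b c)) = Y at hcR ⊢
    field_simp
    linear_combination (u * v * w) * hcR - (u * v * w) * hcL
end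

section
/- (Equation 8: KL divergence from a Dirichlet to the uniform Dirichlet) Fix K : ℕ with K ≥ 2 and α : Fin K → ℝ with α k > 0 for all k. Let 𝟙 : Fin K → ℝ denote the constant function 1, so that f_𝟙 x = Real.Gamma K (a constant) is the density of Dir(1, …, 1). Then ∫_D f_α x * log (f_α x / f_𝟙 x) dx = log (Real.Gamma (∑_k α k) / (Real.Gamma K * ∏_k Real.Gamma (α k))) + ∑_k (α k − 1) * (ψ (α k) − ψ (∑_j α j)), where the integral is the Lebesgue integral over D ⊆ ℝ^(K−1). -/
open MeasureTheory Finset Pointwise intervalIntegral ENNReal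

/-- The domain `D ⊆ ℝ^(K−1)` of the first `K − 1` coordinates of the probability simplex. -/
def simplexDomain (K : ℕ) : Set (Fin (K - 1) → ℝ) :=
  {x | (∀ i, 0 ≤ x i) ∧ ∑ i, x i ≤ 1}

/-- The class probabilities: `μ k x = x k` for `k < K − 1` and `μ (K−1) x = 1 − ∑ i, x i`. -/
noncomputable def dirMu (K : ℕ) (k : Fin K) (x : Fin (K - 1) → ℝ) : ℝ :=
  if h : (k : ℕ) < K - 1 then x ⟨k, h⟩ else 1 - ∑ i, x i

/-- The Dirichlet density with parameter `α` (in the coordinates `x ∈ D`). -/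
noncomputable def dirDensity (K : ℕ) (α : Fin K → ℝ) (x : Fin (K - 1) → ℝ) : ℝ :=
  (Real.Gamma (∑ k, α k) / ∏ k, Real.Gamma (α k)) * ∏ k, dirMu K k x ^ (α k - 1)

/-- The digamma function `ψ s = (log ∘ Γ)' s`. -/
noncomputable def digamma (s : ℝ) : ℝ := deriv (fun t => Real.log (Real.Gamma t)) s

namespace DirKL

/-- simplex domain in explicit dimension -/
def S (n : ℕ) : Set (Fin n → ℝ) := {x | (∀ i, 0 ≤ x i) ∧ ∑ i, x i ≤ 1}

lemma simplexDomain_eq (K : ℕ) : simplexDomain K = S (K - 1) := rfl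

noncomputable def P (n : ℕ) (a : Fin (n+1) → ℝ) (x : Fin n → ℝ) : ℝ :=
  ∏ k, dirMu (n+1) k x ^ (a k - 1)

lemma measurable_dirMu (n : ℕ) (k : Fin (n+1)) : Measurable (dirMu (n+1) k) := by
  unfold dirMu
  split
  · exact measurable_pi_apply _
  · exact measurable_const.sub (Finset.measurable_sum _ (fun i _ => measurable_pi_apply i))

lemma dirMu_lt (n : ℕ) (k : Fin (n+1)) (h : (k:ℕ) < n) (x : Fin n → ℝ) :
    dirMu (n+1) k x = x ⟨k, h⟩ := dif_pos h

lemma dirMu_last (n : ℕ) (k : Fin (n+1)) (h : ¬ (k:ℕ) < n) (x : Fin n → ℝ) :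
    dirMu (n+1) k x = 1 - ∑ i, x i := dif_neg h

lemma measurable_P (n : ℕ) (a : Fin (n+1) → ℝ) : Measurable (P n a) :=
  Finset.measurable_prod _ fun k _ => (measurable_dirMu n k).pow_const _

lemma measurableSet_S (n : ℕ) : MeasurableSet (S n) := by
  have h1 : MeasurableSet {x : Fin n → ℝ | ∀ i, 0 ≤ x i} := by
    rw [Set.setOf_forall]
    exact MeasurableSet.iInter fun i =>
      measurableSet_le measurable_const (measurable_pi_apply i)
  have h2 : MeasurableSet {x : Fin n → ℝ | ∑ i, x i ≤ 1} :=
    measurableSet_le (Finset.measurable_sum _ fun i _ => measurable_pi_apply i) measurable_const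
  exact h1.inter h2

lemma dirMu_nonneg {n : ℕ} {x : Fin n → ℝ} (hx : x ∈ S n) (k : Fin (n+1)) :
    0 ≤ dirMu (n+1) k x := by
  have e : (∑ i : Fin (n+1-1), x i) = ∑ i : Fin n, x i := rfl
  unfold dirMu
  split
  · exact hx.1 _
  · simp only [e]; linarith [hx.2]

lemma dirMu_le_one {n : ℕ} {x : Fin n → ℝ} (hx : x ∈ S n) (k : Fin (n+1)) :
    dirMu (n+1) k x ≤ 1 := by
  have e : (∑ i : Fin (n+1-1), x i) = ∑ i : Fin n, x i := rfl
  unfold dirMu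
  split
  · rename_i h
    calc x ⟨k, h⟩ ≤ ∑ i, x i := Finset.single_le_sum (fun i _ => hx.1 i) (Finset.mem_univ _)
    _ ≤ 1 := hx.2
  · have : 0 ≤ ∑ i, x i := Finset.sum_nonneg fun i _ => hx.1 i
    simp only [e]; linarith

lemma P_nonneg {n : ℕ} (a : Fin (n+1) → ℝ) {x : Fin n → ℝ} (hx : x ∈ S n) : 0 ≤ P n a x :=
  Finset.prod_nonneg fun k _ => Real.rpow_nonneg (dirMu_nonneg hx k) _

/-- the bad boundary set -/
def Z (n : ℕ) : Set (Fin n → ℝ) := {x | (∃ i, x i = 0) ∨ ∑ i, x i = 1}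

lemma volume_Z (n : ℕ) : volume (Z n) = 0 := by
  have key : ∀ (L : (Fin n → ℝ) →ₗ[ℝ] ℝ) (c : ℝ), L ≠ 0 → volume {x | L x = c} = 0 := by
    intro L c hL
    rcases Set.eq_empty_or_nonempty {x | L x = c} with h | ⟨p, hp⟩
    · simp [h]
    · have hset : {x | L x = c} = (p +ᵥ (LinearMap.ker L : Set (Fin n → ℝ))) := by
        ext y
        simp only [Set.mem_setOf_eq, Set.mem_vadd_set]
        constructor
        · intro hy
          exact ⟨y - p, by simp [LinearMap.mem_ker, map_sub, hy, hp.out], by simp⟩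
        · rintro ⟨z, hz, rfl⟩
          simp only [vadd_eq_add, map_add, LinearMap.mem_ker.mp hz, hp.out, add_zero]
      rw [hset, measure_vadd]
      refine Measure.addHaar_submodule volume _ (fun htop => hL ?_)
      refine LinearMap.ext fun v => ?_
      have hv : v ∈ LinearMap.ker L := htop ▸ Submodule.mem_top
      simpa using hv
  rcases Nat.eq_zero_or_pos n with rfl | hn
  · have : Z 0 = ∅ := by
      ext x
      simp [Z]
    simp [this]
  have hZ : Z n ⊆ (⋃ i : Fin n, {x | (LinearMap.proj i : (Fin n → ℝ) →ₗ[ℝ] ℝ) x = 0}) ∪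
      {x | ((∑ i, LinearMap.proj i : (Fin n → ℝ) →ₗ[ℝ] ℝ)) x = 1} := by
    intro x hx
    rcases hx with ⟨i, hi⟩ | h
    · exact Or.inl (Set.mem_iUnion.2 ⟨i, hi⟩)
    · refine Or.inr ?_
      simp only [Set.mem_setOf_eq, LinearMap.coe_sum, Finset.sum_apply, LinearMap.proj_apply]
      exact h
  refine measure_mono_null hZ (measure_union_null (measure_iUnion_null fun i => key _ _ ?_)
    (key _ _ ?_))
  · intro h
    have := congrFun (congrArg (fun (L : (Fin n → ℝ) →ₗ[ℝ] ℝ) => L.toFun) h) (fun _ => 1)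
    simp [LinearMap.proj_apply] at this
  · intro h
    have h2 := congrFun (congrArg (fun (L : (Fin n → ℝ) →ₗ[ℝ] ℝ) => L.toFun) h) (fun _ => 1)
    change (∑ i, LinearMap.proj i : (Fin n → ℝ) →ₗ[ℝ] ℝ) (fun _ => 1) = (0 : (Fin n → ℝ) →ₗ[ℝ] ℝ) (fun _ => 1) at h2
    simp only [LinearMap.coe_sum] at h2
    have h3 : ((n : ℝ)) = 0 := by
      simpa [LinearMap.proj_apply, Finset.sum_apply] using h2
    have : n = 0 := by exact_mod_cast h3
    omega

lemma dirMu_pos {n : ℕ} {x : Fin n → ℝ} (hx : x ∈ S n) (hz : x ∉ Z n) (k : Fin (n+1)) :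
    0 < dirMu (n+1) k x := by
  rcases (dirMu_nonneg hx k).lt_or_eq with h | h
  · exact h
  · exfalso
    apply hz
    unfold dirMu at h
    have e : (∑ i : Fin (n+1-1), x i) = ∑ i : Fin n, x i := rfl
    split at h
    · exact Or.inl ⟨_, h.symm⟩
    · rw [e] at h
      exact Or.inr (by linarith)


lemma cpow_real_eq (a b t : ℝ) (h0 : 0 ≤ t) (h1 : 0 ≤ 1 - t) :
    (t:ℂ) ^ ((a:ℂ)-1) * ((1:ℂ)-(t:ℂ)) ^ ((b:ℂ)-1) = ((t ^ (a-1) * (1-t) ^ (b-1) : ℝ) : ℂ) := by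
  have e1 : ((a:ℂ)-1) = ((a-1 : ℝ) : ℂ) := by push_cast; ring
  have e2 : ((b:ℂ)-1) = ((b-1 : ℝ) : ℂ) := by push_cast; ring
  have e3 : ((1:ℂ)-(t:ℂ)) = ((1-t : ℝ) : ℂ) := by push_cast; ring
  rw [e1, e2, e3, ← Complex.ofReal_cpow h0, ← Complex.ofReal_cpow h1, ← Complex.ofReal_mul]

lemma complex_eq_real_beta (a b : ℝ) :
    (Complex.betaIntegral a b) = ((∫ t in (0:ℝ)..1, t ^ (a-1) * (1-t) ^ (b-1) : ℝ) : ℂ) := by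
  rw [Complex.betaIntegral, ← intervalIntegral.integral_ofReal]
  refine intervalIntegral.integral_congr fun t ht => ?_
  rw [Set.uIcc_of_le (by norm_num : (0:ℝ) ≤ 1)] at ht
  exact cpow_real_eq a b t ht.1 (by linarith [ht.2])

lemma realBeta (a b : ℝ) (ha : 0 < a) (hb : 0 < b) :
    ∫ t in (0:ℝ)..1, t ^ (a-1) * (1-t) ^ (b-1) =
      Real.Gamma a * Real.Gamma b / Real.Gamma (a+b) := by
  have h := Complex.Gamma_mul_Gamma_eq_betaIntegral (s := (a:ℂ)) (t := (b:ℂ))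
    (by simpa using ha) (by simpa using hb)
  rw [complex_eq_real_beta, ← Complex.ofReal_add, Complex.Gamma_ofReal, Complex.Gamma_ofReal,
    Complex.Gamma_ofReal] at h
  have h' : (Real.Gamma a * Real.Gamma b : ℝ) =
      (Real.Gamma (a+b) * ∫ t in (0:ℝ)..1, t ^ (a-1) * (1-t) ^ (b-1) : ℝ) := by
    exact_mod_cast h
  have hG : Real.Gamma (a+b) ≠ 0 := (Real.Gamma_pos_of_pos (by linarith)).ne'
  field_simp [hG] at h' ⊢
  linarith [h']

lemma betaIntegrableOn (a b : ℝ) (ha : 0 < a) (hb : 0 < b) :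
    IntegrableOn (fun t : ℝ => t ^ (a-1) * (1-t) ^ (b-1)) (Set.Ioc 0 1) := by
  have hc : IntervalIntegrable (fun t : ℝ => (t:ℂ) ^ ((a:ℂ)-1) * ((1:ℂ)-(t:ℂ)) ^ ((b:ℂ)-1))
      volume 0 1 := Complex.betaIntegral_convergent (by simpa using ha) (by simpa using hb)
  have h2 : IntegrableOn (fun t : ℝ => (t:ℂ) ^ ((a:ℂ)-1) * ((1:ℂ)-(t:ℂ)) ^ ((b:ℂ)-1))
      (Set.Ioc 0 1) := hc.1
  have h3 := h2.re
  refine h3.congr ?_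
  filter_upwards [self_mem_ae_restrict measurableSet_Ioc] with t ht
  have := cpow_real_eq a b t (le_of_lt ht.1) (by linarith [ht.2])
  simp only [this, Complex.ofReal_re, RCLike.re_to_complex]

lemma lint_beta (a b : ℝ) (ha : 0 < a) (hb : 0 < b) :
    ∫⁻ t in Set.Ioo (0:ℝ) 1, ENNReal.ofReal (t ^ (a-1) * (1-t) ^ (b-1)) =
      ENNReal.ofReal (Real.Gamma a * Real.Gamma b / Real.Gamma (a+b)) := by
  have hIoo : IntegrableOn (fun t : ℝ => t ^ (a-1) * (1-t) ^ (b-1)) (Set.Ioo 0 1) :=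
    (betaIntegrableOn a b ha hb).mono_set Set.Ioo_subset_Ioc_self
  rw [← ofReal_integral_eq_lintegral_ofReal hIoo]
  · congr 1
    have : ∫ t in Set.Ioo (0:ℝ) 1, t ^ (a-1) * (1-t) ^ (b-1) =
        ∫ t in (0:ℝ)..1, t ^ (a-1) * (1-t) ^ (b-1) := by
      rw [intervalIntegral.integral_of_le (by norm_num : (0:ℝ) ≤ 1),
        MeasureTheory.integral_Ioc_eq_integral_Ioo]
    rw [this, realBeta a b ha hb]
  · filter_upwards [self_mem_ae_restrict measurableSet_Ioo] with t ht
    exact mul_nonneg (Real.rpow_nonneg (le_of_lt ht.1) _)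
      (Real.rpow_nonneg (by linarith [ht.2]) _)


/-- scaled integrand -/
noncomputable def Q (n : ℕ) (c : ℝ) (b : Fin (n+1) → ℝ) (y : Fin n → ℝ) : ℝ :=
  ∏ k : Fin (n+1), (if h : (k:ℕ) < n then y ⟨k, h⟩ else c - ∑ i, y i) ^ (b k - 1)

lemma Q_one (n : ℕ) (b : Fin (n+1) → ℝ) : Q n 1 b = P n b := by rfl

lemma measurable_Q (n : ℕ) (c : ℝ) (b : Fin (n+1) → ℝ) : Measurable (Q n c b) := by
  refine Finset.measurable_prod _ fun k _ => Measurable.pow_const ?_ _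
  split
  · exact measurable_pi_apply _
  · exact measurable_const.sub (Finset.measurable_sum _ fun i _ => measurable_pi_apply i)

lemma measurableSet_Sc (n : ℕ) (c : ℝ) :
    MeasurableSet {y : Fin n → ℝ | (∀ i, 0 ≤ y i) ∧ ∑ i, y i ≤ c} := by
  have h1 : MeasurableSet {x : Fin n → ℝ | ∀ i, 0 ≤ x i} := by
    rw [Set.setOf_forall]
    exact MeasurableSet.iInter fun i =>
      measurableSet_le measurable_const (measurable_pi_apply i)
  exact h1.inter (measurableSet_le
    (Finset.measurable_sum _ fun i _ => measurable_pi_apply i) measurable_const)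

lemma scaling (n : ℕ) (b : Fin (n+1) → ℝ) (hb : ∀ k, 0 < b k) {c : ℝ} (hc : 0 < c) :
    ∫⁻ y, Set.indicator {y : Fin n → ℝ | (∀ i, 0 ≤ y i) ∧ ∑ i, y i ≤ c}
        (fun y => ENNReal.ofReal (Q n c b y)) y
      = ENNReal.ofReal (c ^ ((∑ k, b k) - 1)) *
        ∫⁻ x in S n, ENNReal.ofReal (P n b x) := by
  set s := ∑ k, b k with hs
  have hcn : (0:ℝ) < c ^ n := pow_pos hc n
  -- volume in terms of pushforward under scaling
  have hvol : (volume : Measure (Fin n → ℝ)) =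
      ENNReal.ofReal (c ^ n) • Measure.map (c • ·) volume := by
    rw [Measure.map_addHaar_smul volume hc.ne', smul_smul, ← ENNReal.ofReal_mul hcn.le]
    rw [Module.finrank_fintype_fun_eq_card, Fintype.card_fin]
    rw [abs_of_pos (inv_pos.2 hcn), mul_inv_cancel₀ hcn.ne']
    simp
  set f : (Fin n → ℝ) → ℝ≥0∞ := Set.indicator {y : Fin n → ℝ | (∀ i, 0 ≤ y i) ∧ ∑ i, y i ≤ c}
    (fun y => ENNReal.ofReal (Q n c b y)) with hf
  have hfm : Measurable f :=
    ((measurable_Q n c b).ennreal_ofReal).indicator (measurableSet_Sc n c)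
  have key : ∀ z : Fin n → ℝ, f (c • z) =
      ENNReal.ofReal (c ^ (s - (n+1) : ℝ)) *
        Set.indicator (S n) (fun x => ENNReal.ofReal (P n b x)) z := by
    intro z
    by_cases hz : z ∈ S n
    · have hmem : c • z ∈ {y : Fin n → ℝ | (∀ i, 0 ≤ y i) ∧ ∑ i, y i ≤ c} := by
        constructor
        · intro i
          exact mul_nonneg hc.le (hz.1 i)
        · simp only [Pi.smul_apply, smul_eq_mul, ← Finset.mul_sum]
          calc c * ∑ i, z i ≤ c * 1 := by
                exact mul_le_mul_of_nonneg_left hz.2 hc.le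
          _ = c := mul_one c
      rw [hf, Set.indicator_of_mem hmem, Set.indicator_of_mem hz]
      have hQ : Q n c b (c • z) = c ^ (s - (n+1) : ℝ) * P n b z := by
        unfold Q P
        have step : ∀ k : Fin (n+1),
            (if h : (k:ℕ) < n then (c • z) ⟨k, h⟩ else c - ∑ i, (c • z) i) ^ (b k - 1)
            = c ^ (b k - 1) * dirMu (n+1) k z ^ (b k - 1) := by
          intro k
          have hbase : (if h : (k:ℕ) < n then (c • z) ⟨k, h⟩ else c - ∑ i, (c • z) i)
              = c * dirMu (n+1) k z := by
            by_cases h : (k:ℕ) < n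
            · rw [dif_pos h, dirMu_lt n k h]
              simp
            · rw [dif_neg h, dirMu_last n k h]
              simp only [Pi.smul_apply, smul_eq_mul, ← Finset.mul_sum]
              ring
          rw [hbase, Real.mul_rpow hc.le (dirMu_nonneg hz k)]
        rw [Finset.prod_congr rfl (fun k _ => step k), Finset.prod_mul_distrib,
          ← Real.rpow_sum_of_pos hc]
        congr 2
        rw [Finset.sum_sub_distrib]
        simp [hs, Finset.card_univ]
      rw [hQ, ENNReal.ofReal_mul (Real.rpow_nonneg hc.le _)]
    · have hmem : c • z ∉ {y : Fin n → ℝ | (∀ i, 0 ≤ y i) ∧ ∑ i, y i ≤ c} := by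
        intro hmem
        apply hz
        constructor
        · intro i
          have := hmem.1 i
          simp only [Pi.smul_apply, smul_eq_mul] at this
          nlinarith [this]
        · have := hmem.2
          simp only [Pi.smul_apply, smul_eq_mul, ← Finset.mul_sum] at this
          nlinarith [this]
      rw [hf, Set.indicator_of_notMem hmem, Set.indicator_of_notMem hz, mul_zero]
  calc ∫⁻ y, f y
      = ∫⁻ y, f y ∂(ENNReal.ofReal (c ^ n) • Measure.map (c • ·) volume) := by rw [← hvol]
    _ = ENNReal.ofReal (c ^ n) * ∫⁻ y, f y ∂(Measure.map (c • ·) volume) := by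
        rw [lintegral_smul_measure, smul_eq_mul]
    _ = ENNReal.ofReal (c ^ n) * ∫⁻ z, f (c • z) := by
        rw [lintegral_map hfm (measurable_const_smul c)]
    _ = ENNReal.ofReal (c ^ n) * (ENNReal.ofReal (c ^ (s - (n+1) : ℝ)) *
          ∫⁻ z, Set.indicator (S n) (fun x => ENNReal.ofReal (P n b x)) z) := by
        rw [lintegral_congr key, lintegral_const_mul _
          (((measurable_P n b).ennreal_ofReal).indicator (measurableSet_S n))]
    _ = ENNReal.ofReal (c ^ (s - 1)) * ∫⁻ x in S n, ENNReal.ofReal (P n b x) := by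
        rw [← mul_assoc, ← ENNReal.ofReal_mul hcn.le]
        rw [show ∫⁻ z, Set.indicator (S n) (fun x => ENNReal.ofReal (P n b x)) z
            = ∫⁻ x in S n, ENNReal.ofReal (P n b x) from
          lintegral_indicator (measurableSet_S n) _]
        congr 2
        rw [← Real.rpow_natCast c n, ← Real.rpow_add hc]
        congr 1
        push_cast
        ring

theorem lint_P : ∀ (n : ℕ) (a : Fin (n+1) → ℝ), (∀ k, 0 < a k) →
    ∫⁻ x in S n, ENNReal.ofReal (P n a x) =
      ENNReal.ofReal ((∏ k, Real.Gamma (a k)) / Real.Gamma (∑ k, a k)) := by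
  intro n
  induction n with
  | zero =>
    intro a ha
    have hS : S 0 = Set.univ := by
      ext x
      simp [S]
    have hP : ∀ x : Fin 0 → ℝ, P 0 a x = 1 := by
      intro x
      unfold P
      rw [Fin.prod_univ_one, dirMu_last 0 0 (by omega) x]
      simp
    rw [hS, Measure.restrict_univ]
    rw [lintegral_congr (fun x => by rw [hP x])]
    rw [lintegral_const, volume_pi, Measure.pi_univ]
    simp [Fin.prod_univ_one, Fin.sum_univ_one,
      div_self (Real.Gamma_pos_of_pos (ha 0)).ne']
  | succ n ih =>
    intro a ha
    set b : Fin (n+1) → ℝ := fun k => a k.succ with hb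
    have hbpos : ∀ k, 0 < b k := fun k => ha k.succ
    set s : ℝ := ∑ k, b k with hs
    have hspos : 0 < s := Finset.sum_pos (fun k _ => hbpos k) Finset.univ_nonempty
    have ha0 : 0 < a 0 := ha 0
    set Bval : ℝ := (∏ k, Real.Gamma (b k)) / Real.Gamma s with hBval
    have ihv : ∫⁻ x in S n, ENNReal.ofReal (P n b x) = ENNReal.ofReal Bval := ih b hbpos
    set e := MeasurableEquiv.piFinSuccAbove (fun _ : Fin (n+1) => ℝ) 0 with he
    have hmp : MeasurePreserving e volume volume :=
      volume_preserving_piFinSuccAbove (fun _ : Fin (n+1) => ℝ) 0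
    set F : (Fin (n+1) → ℝ) → ℝ≥0∞ :=
      Set.indicator (S (n+1)) (fun x => ENNReal.ofReal (P (n+1) a x)) with hF
    have hFm : Measurable F :=
      ((measurable_P (n+1) a).ennreal_ofReal).indicator (measurableSet_S (n+1))
    set G : ℝ × (Fin n → ℝ) → ℝ≥0∞ := fun p => F (e.symm p) with hG
    have hGm : Measurable G := hFm.comp e.symm.measurable
    -- pointwise structure of G
    have hGpt : ∀ (t : ℝ) (y : Fin n → ℝ), t ≠ 1 →
        G (t, y) = Set.indicator {y : Fin n → ℝ | (∀ i, 0 ≤ y i) ∧ ∑ i, y i ≤ 1 - t}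
          (fun y => ENNReal.ofReal (t ^ (a 0 - 1) * Q n (1-t) b y)) y
          * Set.indicator (Set.Ici (0:ℝ)) (fun _ => 1) t := by
      intro t y ht1
      set x₀ : Fin (n+1) → ℝ := e.symm (t, y) with hx₀
      have hx0 : x₀ 0 = t := by
        rw [hx₀, he]
        simp [MeasurableEquiv.piFinSuccAbove]
      have hxs : ∀ j : Fin n, x₀ j.succ = y j := by
        intro j
        rw [hx₀, he]
        simp [MeasurableEquiv.piFinSuccAbove]
      have hsum : ∑ i, x₀ i = t + ∑ j, y j := by
        have h2 : ∑ j : Fin n, x₀ j.succ = ∑ j : Fin n, y j :=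
          Finset.sum_congr rfl fun j _ => hxs j
        rw [Fin.sum_univ_succ, hx0, h2]
      have hmemiff : x₀ ∈ S (n+1) ↔
          (0 ≤ t ∧ ((∀ i, 0 ≤ y i) ∧ ∑ i, y i ≤ 1 - t)) := by
        constructor
        · rintro ⟨h1, h2⟩
          rw [Fin.forall_fin_succ] at h1
          rw [hsum] at h2
          refine ⟨by rw [← hx0]; exact h1.1, fun i => by rw [← hxs i]; exact h1.2 i, by linarith⟩
        · rintro ⟨h0, h1, h2⟩
          constructor
          · rw [Fin.forall_fin_succ, hx0]
            exact ⟨h0, fun i => by rw [hxs i]; exact h1 i⟩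
          · rw [hsum]; linarith
      by_cases hmem : x₀ ∈ S (n+1)
      · have hm' := hmemiff.mp hmem
        have hPval : P (n+1) a x₀ = t ^ (a 0 - 1) * Q n (1-t) b y := by
          unfold P Q
          rw [Fin.prod_univ_succ]
          congr 1
          · refine Finset.prod_congr rfl fun k _ => ?_
            by_cases hk : (k : ℕ) < n
            · have hlt : ((k.succ : Fin (n+2)) : ℕ) < n + 1 := by
                rw [Fin.val_succ]; exact Nat.succ_lt_succ hk
              rw [dif_pos hk, dirMu_lt (n+1) k.succ hlt x₀]
              have hxeq : x₀ ⟨((k.succ : Fin (n+2))).val, hlt⟩ = y ⟨(k:ℕ), hk⟩ := by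
                have h1 : (⟨((k.succ : Fin (n+2))).val, hlt⟩ : Fin (n+1))
                    = (⟨(k : ℕ), hk⟩ : Fin n).succ := by
                  apply Fin.ext
                  simp
                rw [h1]
                exact hxs _
              rw [hxeq]
            · have hlt : ¬ ((k.succ : Fin (n+2)) : ℕ) < n + 1 := by
                rw [Fin.val_succ]; exact fun h => hk (Nat.lt_of_succ_lt_succ h)
              rw [dif_neg hk, dirMu_last (n+1) k.succ hlt x₀, hsum]
              ring_nf
              rfl
        have hGF : G (t, y)
            = Set.indicator (S (n+1)) (fun x => ENNReal.ofReal (P (n+1) a x)) x₀ := rfl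
        rw [hGF, Set.indicator_of_mem hmem, hPval,
          Set.indicator_of_mem (by exact hm'.2),
          Set.indicator_of_mem (Set.mem_Ici.mpr hm'.1), mul_one]
      · have hGF : G (t, y)
            = Set.indicator (S (n+1)) (fun x => ENNReal.ofReal (P (n+1) a x)) x₀ := rfl
        rw [hGF, Set.indicator_of_notMem hmem]
        by_cases h0 : 0 ≤ t
        · have hy : y ∉ {y : Fin n → ℝ | (∀ i, 0 ≤ y i) ∧ ∑ i, y i ≤ 1 - t} := by
            intro hy
            exact hmem (hmemiff.mpr ⟨h0, hy⟩)
          rw [Set.indicator_of_notMem hy, zero_mul]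
        · rw [Set.indicator_of_notMem (show t ∉ Set.Ici (0:ℝ) from fun hh => h0 hh), mul_zero]
    -- main computation
    have hbig : (∫⁻ x in S (n+1), ENNReal.ofReal (P (n+1) a x))
        = ∫⁻ t, ∫⁻ y, G (t, y) := by
      rw [← lintegral_indicator (measurableSet_S (n+1))]
      have : ∀ x, F x = G (e x) := by
        intro x
        rw [show G (e x) = F (e.symm (e x)) from rfl, MeasurableEquiv.symm_apply_apply]
      rw [show (∫⁻ x, Set.indicator (S (n+1)) (fun x => ENNReal.ofReal (P (n+1) a x)) x)
          = ∫⁻ x, G (e x) from lintegral_congr this]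
      rw [hmp.lintegral_comp hGm]
      rw [Measure.volume_eq_prod, MeasureTheory.lintegral_prod _ hGm.aemeasurable]
    -- identify the inner integral a.e.
    have hae : (fun t => ∫⁻ y, G (t, y)) =ᵐ[volume]
        (fun t => Set.indicator (Set.Ioo (0:ℝ) 1)
          (fun t => ENNReal.ofReal (t ^ (a 0 - 1) * ((1-t) ^ (s - 1) * Bval))) t) := by
      have hne : ∀ᵐ t : ℝ, t ≠ 0 ∧ t ≠ 1 := by
        have h0 : volume ({0} : Set ℝ) = 0 := Real.volume_singleton
        have h1 : volume ({1} : Set ℝ) = 0 := Real.volume_singleton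
        filter_upwards [measure_eq_zero_iff_ae_notMem.mp h0, measure_eq_zero_iff_ae_notMem.mp h1]
          with t ht0 ht1
        exact ⟨ht0, ht1⟩
      filter_upwards [hne] with t ⟨ht0, ht1⟩
      by_cases htI : t ∈ Set.Ioo (0:ℝ) 1
      · obtain ⟨htl, htr⟩ := htI
        have hc : (0:ℝ) < 1 - t := by linarith
        rw [Set.indicator_of_mem (Set.mem_Ioo.mpr ⟨htl, htr⟩)]
        calc ∫⁻ y, G (t, y)
            = ∫⁻ y, Set.indicator {y : Fin n → ℝ | (∀ i, 0 ≤ y i) ∧ ∑ i, y i ≤ 1 - t}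
                (fun y => ENNReal.ofReal (t ^ (a 0 - 1) * Q n (1-t) b y)) y := by
              refine lintegral_congr fun y => ?_
              rw [hGpt t y ht1, Set.indicator_of_mem (Set.mem_Ici.mpr htl.le), mul_one]
          _ = ∫⁻ y, ENNReal.ofReal (t ^ (a 0 - 1)) *
                Set.indicator {y : Fin n → ℝ | (∀ i, 0 ≤ y i) ∧ ∑ i, y i ≤ 1 - t}
                (fun y => ENNReal.ofReal (Q n (1-t) b y)) y := by
              refine lintegral_congr fun y => ?_
              by_cases hy : y ∈ {y : Fin n → ℝ | (∀ i, 0 ≤ y i) ∧ ∑ i, y i ≤ 1 - t}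
              · rw [Set.indicator_of_mem hy, Set.indicator_of_mem hy,
                  ENNReal.ofReal_mul (Real.rpow_nonneg htl.le _)]
              · rw [Set.indicator_of_notMem hy, Set.indicator_of_notMem hy, mul_zero]
          _ = ENNReal.ofReal (t ^ (a 0 - 1)) *
                ∫⁻ y, Set.indicator {y : Fin n → ℝ | (∀ i, 0 ≤ y i) ∧ ∑ i, y i ≤ 1 - t}
                (fun y => ENNReal.ofReal (Q n (1-t) b y)) y := by
              rw [lintegral_const_mul _
                (((measurable_Q n (1-t) b).ennreal_ofReal).indicator (measurableSet_Sc n (1-t)))]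
          _ = ENNReal.ofReal (t ^ (a 0 - 1)) *
                (ENNReal.ofReal ((1-t) ^ (s - 1)) * ENNReal.ofReal Bval) := by
              rw [scaling n b hbpos hc, ihv]
          _ = ENNReal.ofReal (t ^ (a 0 - 1) * ((1-t) ^ (s - 1) * Bval)) := by
              rw [← ENNReal.ofReal_mul (Real.rpow_nonneg hc.le _),
                ← ENNReal.ofReal_mul (Real.rpow_nonneg htl.le _)]
      · rw [Set.indicator_of_notMem htI]
        have hcase : t < 0 ∨ 1 < t := by
          simp only [Set.mem_Ioo, not_and_or, not_lt] at htI
          rcases htI with h | h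
          · left; exact lt_of_le_of_ne h ht0
          · right; exact lt_of_le_of_ne h (Ne.symm ht1)
        refine (lintegral_congr fun y => ?_).trans lintegral_zero
        rw [hGpt t y ht1]
        rcases hcase with h | h
        · rw [Set.indicator_of_notMem (show t ∉ Set.Ici (0:ℝ) from fun hh => absurd (Set.mem_Ici.mp hh) (not_le.mpr h)), mul_zero]
        · have hy : y ∉ {y : Fin n → ℝ | (∀ i, 0 ≤ y i) ∧ ∑ i, y i ≤ 1 - t} := by
            rintro ⟨h1, h2⟩
            have : (0:ℝ) ≤ ∑ i, y i := Finset.sum_nonneg fun i _ => h1 i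
            linarith
          rw [Set.indicator_of_notMem hy, zero_mul]
    rw [hbig, lintegral_congr_ae hae, lintegral_indicator measurableSet_Ioo]
    have : ∀ t ∈ Set.Ioo (0:ℝ) 1,
        ENNReal.ofReal (t ^ (a 0 - 1) * ((1-t) ^ (s - 1) * Bval))
        = ENNReal.ofReal (t ^ (a 0 - 1) * (1-t) ^ (s - 1)) * ENNReal.ofReal Bval := by
      intro t ht
      rw [← ENNReal.ofReal_mul (mul_nonneg (Real.rpow_nonneg ht.1.le _)
        (Real.rpow_nonneg (by linarith [ht.2] : (0:ℝ) ≤ 1 - t) _))]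
      ring_nf
    rw [setLIntegral_congr_fun measurableSet_Ioo this]
    rw [lintegral_mul_const _ (by
      exact ((measurable_id.pow_const _).mul
        ((measurable_const.sub measurable_id).pow_const _)).ennreal_ofReal)]
    rw [lint_beta (a 0) s ha0 hspos]
    rw [← ENNReal.ofReal_mul (by positivity)]
    congr 1
    have hGa0 : 0 < Real.Gamma (a 0) := Real.Gamma_pos_of_pos ha0
    have hGs : 0 < Real.Gamma s := Real.Gamma_pos_of_pos hspos
    have hGas : 0 < Real.Gamma (a 0 + s) := Real.Gamma_pos_of_pos (by linarith)
    have hprod : (∏ k : Fin (n+2), Real.Gamma (a k))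
        = Real.Gamma (a 0) * ∏ k : Fin (n+1), Real.Gamma (b k) := Fin.prod_univ_succ _
    have hsum2 : (∑ k : Fin (n+2), a k) = a 0 + s := Fin.sum_univ_succ _
    rw [hBval, hprod, hsum2]
    field_simp
lemma Bpos {n : ℕ} {a : Fin (n+1) → ℝ} (ha : ∀ k, 0 < a k) :
    0 < (∏ k, Real.Gamma (a k)) / Real.Gamma (∑ k, a k) :=
  div_pos (Finset.prod_pos fun k _ => Real.Gamma_pos_of_pos (ha k))
    (Real.Gamma_pos_of_pos (Finset.sum_pos (fun k _ => ha k) Finset.univ_nonempty))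

lemma integrableOn_P (n : ℕ) (a : Fin (n+1) → ℝ) (ha : ∀ k, 0 < a k) :
    IntegrableOn (P n a) (S n) volume := by
  constructor
  · exact (measurable_P n a).aestronglyMeasurable
  · rw [hasFiniteIntegral_iff_norm]
    have hae : ∀ᵐ x ∂(volume.restrict (S n)),
        ENNReal.ofReal ‖P n a x‖ = ENNReal.ofReal (P n a x) := by
      filter_upwards [ae_restrict_mem (measurableSet_S n)] with x hx
      rw [Real.norm_eq_abs, abs_of_nonneg (P_nonneg a hx)]
    rw [lintegral_congr_ae hae, lint_P n a ha]
    exact ENNReal.ofReal_lt_top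

lemma setIntegral_P (n : ℕ) (a : Fin (n+1) → ℝ) (ha : ∀ k, 0 < a k) :
    ∫ x in S n, P n a x = (∏ k, Real.Gamma (a k)) / Real.Gamma (∑ k, a k) := by
  rw [integral_eq_lintegral_of_nonneg_ae ?_ (measurable_P n a).aestronglyMeasurable]
  · rw [lint_P n a ha, ENNReal.toReal_ofReal (Bpos ha).le]
  · filter_upwards [ae_restrict_mem (measurableSet_S n)] with x hx
    exact P_nonneg a hx
lemma Gamma_diffAt {s : ℝ} (hs : 0 < s) : DifferentiableAt ℝ Real.Gamma s :=
  Real.differentiableAt_Gamma (fun m h => by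
    have : (0:ℝ) ≤ (m:ℝ) := Nat.cast_nonneg m
    rw [h] at hs
    linarith)

lemma deriv_Gamma_eq {s : ℝ} (hs : 0 < s) :
    deriv Real.Gamma s = Real.Gamma s * digamma s := by
  have hG : 0 < Real.Gamma s := Real.Gamma_pos_of_pos hs
  have hlog : HasDerivAt (fun t => Real.log (Real.Gamma t))
      ((Real.Gamma s)⁻¹ * deriv Real.Gamma s) s :=
    (Real.hasDerivAt_log hG.ne').comp s (Gamma_diffAt hs).hasDerivAt
  have hd : digamma s = (Real.Gamma s)⁻¹ * deriv Real.Gamma s := hlog.deriv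
  rw [hd]
  field_simp

lemma P_split (n : ℕ) (a : Fin (n+1) → ℝ) (k : Fin (n+1)) (b : ℝ) (x : Fin n → ℝ) :
    P n (Function.update a k b) x
      = dirMu (n+1) k x ^ (b - 1) *
        ∏ j ∈ Finset.univ.erase k, dirMu (n+1) j x ^ (a j - 1) := by
  unfold P
  rw [← Finset.mul_prod_erase _ _ (Finset.mem_univ k), Function.update_self]
  congr 1
  refine Finset.prod_congr rfl fun j hj => ?_
  rw [Function.update_of_ne (Finset.ne_of_mem_erase hj)]

lemma P_mul_log (n : ℕ) (a : Fin (n+1) → ℝ) (ha : ∀ k, 0 < a k) (k : Fin (n+1)) :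
    IntegrableOn (fun x => P n a x * Real.log (dirMu (n+1) k x)) (S n) volume ∧
    ∫ x in S n, P n a x * Real.log (dirMu (n+1) k x)
      = ((∏ j, Real.Gamma (a j)) / Real.Gamma (∑ j, a j)) *
        (digamma (a k) - digamma (∑ j, a j)) := by
  classical
  set μ := volume.restrict (S n) with hμ
  set ε : ℝ := a k / 4 with hε
  have hεpos : 0 < ε := by rw [hε]; linarith [ha k]
  set F : ℝ → (Fin n → ℝ) → ℝ := fun b x => P n (Function.update a k b) x with hF
  set F' : ℝ → (Fin n → ℝ) → ℝ :=
    fun b x => P n (Function.update a k b) x * Real.log (dirMu (n+1) k x) with hF'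
  set R : (Fin n → ℝ) → ℝ :=
    fun x => ∏ j ∈ Finset.univ.erase k, dirMu (n+1) j x ^ (a j - 1) with hR
  set bound : (Fin n → ℝ) → ℝ :=
    fun x => ε⁻¹ * P n (Function.update a k (a k / 2)) x with hbound
  have hRx : ∀ x : Fin n → ℝ,
      (∏ j ∈ Finset.univ.erase k, dirMu (n+1) j x ^ (a j - 1)) = R x := fun _ => rfl
  have hupd : ∀ c : ℝ, 0 < c → ∀ j, 0 < Function.update a k c j := by
    intro c hcpos j
    rcases eq_or_ne j k with rfl | hj
    · rw [Function.update_self]; exact hcpos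
    · rw [Function.update_of_ne hj]; exact ha j
  have haeSZ : ∀ᵐ x ∂μ, x ∈ S n ∧ x ∉ Z n := by
    rw [hμ]
    filter_upwards [ae_restrict_mem (measurableSet_S n),
      ae_restrict_of_ae (measure_eq_zero_iff_ae_notMem.mp (volume_Z n))] with x h1 h2
    exact ⟨h1, h2⟩
  -- the dominated-derivative theorem
  have key := hasDerivAt_integral_of_dominated_loc_of_deriv_le (μ := μ)
    (F := F) (F' := F') (x₀ := a k) (bound := bound) (Metric.ball_mem_nhds (a k) hεpos)
    (Filter.Eventually.of_forall fun b =>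
      (measurable_P n (Function.update a k b)).aestronglyMeasurable)
    (by
      rw [hF]
      simp only [Function.update_eq_self]
      exact integrableOn_P n a ha)
    (((measurable_P n (Function.update a k (a k))).mul
      (Real.measurable_log.comp (measurable_dirMu n k))).aestronglyMeasurable)
    (by
      filter_upwards [haeSZ] with x ⟨hx, hz⟩
      intro b hb
      have hc : 0 < dirMu (n+1) k x := dirMu_pos hx hz k
      have hc1 : dirMu (n+1) k x ≤ 1 := dirMu_le_one hx k
      set c := dirMu (n+1) k x with hcdef
      have hRnn : 0 ≤ R x :=
        Finset.prod_nonneg fun j _ => Real.rpow_nonneg (dirMu_nonneg hx j) _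
      have hnorm : ‖F' b x‖ = (c ^ (b-1) * |Real.log c|) * R x := by
        rw [hF']
        simp only []
        rw [P_split n a k b x, hRx x, ← hcdef, Real.norm_eq_abs, abs_mul, abs_mul,
          abs_of_nonneg (Real.rpow_nonneg hc.le _), abs_of_nonneg hRnn]
        ring
      have h1 : c ^ (b-1) ≤ c ^ (a k - ε - 1) := by
        refine Real.rpow_le_rpow_of_exponent_ge hc hc1 ?_
        have := Metric.mem_ball.mp hb
        rw [Real.dist_eq, abs_lt] at this
        linarith [this.1]
      have h2 : |Real.log c| ≤ ε⁻¹ * c ^ (-ε) := by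
        have hlog_np : Real.log c ≤ 0 := Real.log_nonpos hc.le hc1
        rw [abs_of_nonpos hlog_np, ← Real.log_inv]
        have := Real.log_le_rpow_div (x := c⁻¹) (ε := ε) (by positivity) hεpos
        calc Real.log c⁻¹ ≤ c⁻¹ ^ ε / ε := this
          _ = ε⁻¹ * c ^ (-ε) := by
              rw [Real.inv_rpow hc.le, ← Real.rpow_neg hc.le]
              ring
      have h3 : c ^ (b-1) * |Real.log c| ≤ ε⁻¹ * c ^ (a k / 2 - 1) := by
        calc c ^ (b-1) * |Real.log c| ≤ c ^ (a k - ε - 1) * (ε⁻¹ * c ^ (-ε)) :=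
              mul_le_mul h1 h2 (abs_nonneg _) (Real.rpow_nonneg hc.le _)
          _ = ε⁻¹ * (c ^ (a k - ε - 1) * c ^ (-ε)) := by ring
          _ = ε⁻¹ * c ^ (a k / 2 - 1) := by
              rw [← Real.rpow_add hc]
              congr 1
              rw [hε]
              ring
      rw [hnorm, hbound]
      calc (c ^ (b-1) * |Real.log c|) * R x ≤ (ε⁻¹ * c ^ (a k / 2 - 1)) * R x :=
            mul_le_mul_of_nonneg_right h3 hRnn
        _ = ε⁻¹ * P n (Function.update a k (a k / 2)) x := by
            rw [P_split n a k (a k / 2) x, hRx x, ← hcdef]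
            ring)
    (by
      rw [hbound]
      exact (integrableOn_P n (Function.update a k (a k / 2))
        (hupd _ (by linarith [ha k]))).const_mul _)
    (by
      filter_upwards [haeSZ] with x ⟨hx, hz⟩
      intro b hb
      have hc : 0 < dirMu (n+1) k x := dirMu_pos hx hz k
      have hder : HasDerivAt (fun b : ℝ => P n (Function.update a k b) x)
          (P n (Function.update a k b) x * Real.log (dirMu (n+1) k x)) b := by
        have hbase : HasDerivAt (fun b : ℝ => dirMu (n+1) k x ^ (b - 1))
            (dirMu (n+1) k x ^ (b - 1) * Real.log (dirMu (n+1) k x)) b := by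
          have h0 : HasDerivAt (fun u : ℝ => dirMu (n+1) k x ^ u)
              (dirMu (n+1) k x ^ (b - 1) * Real.log (dirMu (n+1) k x)) (b - 1) :=
            (Real.hasStrictDerivAt_const_rpow hc (b - 1)).hasDerivAt
          have h1 : HasDerivAt (fun b : ℝ => b - 1) 1 b :=
            (hasDerivAt_id b).sub_const 1
          exact h0.comp_sub_const b 1
        have := hbase.mul_const (R x)
        refine HasDerivAt.congr_of_eventuallyEq ?_
          (Filter.Eventually.of_forall fun b => (P_split n a k b x))
        exact this.congr_deriv (by rw [P_split n a k b x, hRx x]; ring)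
      exact hder)
  obtain ⟨hint, hderiv⟩ := key
  have hintegrable : IntegrableOn
      (fun x => P n a x * Real.log (dirMu (n+1) k x)) (S n) volume := by
    have : F' (a k) = fun x => P n a x * Real.log (dirMu (n+1) k x) := by
      rw [hF']
      simp only [Function.update_eq_self]
    rw [← this]
    exact hint
  refine ⟨hintegrable, ?_⟩
  -- identify the derivative using the Gamma formula
  set t : ℝ := ∑ j ∈ Finset.univ.erase k, a j with ht
  have htpos : 0 ≤ t := Finset.sum_nonneg fun j _ => (ha j).le
  have hsum_split : ∑ j, a j = a k + t := (Finset.add_sum_erase _ _ (Finset.mem_univ k)).symm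
  set CR : ℝ := ∏ j ∈ Finset.univ.erase k, Real.Gamma (a j) with hCR
  have hCRpos : 0 < CR := Finset.prod_pos fun j _ => Real.Gamma_pos_of_pos (ha j)
  set Bfun : ℝ → ℝ := fun b => Real.Gamma b * CR / Real.Gamma (b + t) with hBfun
  have hagree : ∀ b : ℝ, 0 < b → (∫ x, F b x ∂μ) = Bfun b := by
    intro b hbpos
    rw [hF, hμ]
    rw [setIntegral_P n (Function.update a k b) (hupd b hbpos)]
    rw [hBfun]
    congr 1
    · rw [← Finset.mul_prod_erase _ _ (Finset.mem_univ k), Function.update_self, hCR]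
      congr 1
      refine Finset.prod_congr rfl fun j hj => ?_
      rw [Function.update_of_ne (Finset.ne_of_mem_erase hj)]
    · congr 1
      rw [← Finset.add_sum_erase _ _ (Finset.mem_univ k), Function.update_self, ht]
      congr 1
      refine Finset.sum_congr rfl fun j hj => ?_
      rw [Function.update_of_ne (Finset.ne_of_mem_erase hj)]
  have hBder : HasDerivAt Bfun
      (Bfun (a k) * (digamma (a k) - digamma (a k + t))) (a k) := by
    have hak : 0 < a k := ha k
    have hakt : 0 < a k + t := by linarith
    have hG1 : 0 < Real.Gamma (a k) := Real.Gamma_pos_of_pos hak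
    have hG2 : 0 < Real.Gamma (a k + t) := Real.Gamma_pos_of_pos hakt
    have hnum : HasDerivAt (fun b => Real.Gamma b * CR)
        (deriv Real.Gamma (a k) * CR) (a k) := (Gamma_diffAt hak).hasDerivAt.mul_const CR
    have hden : HasDerivAt (fun b : ℝ => Real.Gamma (b + t))
        (deriv Real.Gamma (a k + t)) (a k) := by
      have h1 : HasDerivAt (fun b : ℝ => b + t) 1 (a k) := (hasDerivAt_id _).add_const t
      exact ((Gamma_diffAt hakt).hasDerivAt).comp_add_const (a k) t
    have hdiv := hnum.div hden hG2.ne'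
    refine hdiv.congr_deriv ?_
    rw [hBfun]
    simp only []
    rw [deriv_Gamma_eq hak, deriv_Gamma_eq hakt]
    field_simp
  have heq : (fun b => ∫ x, F b x ∂μ) =ᶠ[nhds (a k)] Bfun := by
    have hball : Metric.ball (a k) (a k / 2) ∈ nhds (a k) :=
      Metric.ball_mem_nhds _ (by linarith [ha k])
    filter_upwards [hball] with b hb
    have : 0 < b := by
      have := Metric.mem_ball.mp hb
      rw [Real.dist_eq, abs_lt] at this
      linarith [this.1]
    exact hagree b this
  have hG_deriv : HasDerivAt (fun b => ∫ x, F b x ∂μ)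
      (Bfun (a k) * (digamma (a k) - digamma (a k + t))) (a k) :=
    hBder.congr_of_eventuallyEq heq
  have huniq : (∫ x, F' (a k) x ∂μ)
      = Bfun (a k) * (digamma (a k) - digamma (a k + t)) :=
    hderiv.unique hG_deriv
  have hlhs : (∫ x, F' (a k) x ∂μ)
      = ∫ x in S n, P n a x * Real.log (dirMu (n+1) k x) := by
    rw [hμ, hF']
    simp only [Function.update_eq_self]
  rw [← hlhs, huniq, hsum_split]
  congr 2
  rw [hBfun]
  simp only []
  rw [hCR, ← Finset.mul_prod_erase Finset.univ (fun j => Real.Gamma (a j)) (Finset.mem_univ k)]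
end DirKL

open DirKL in
/-- Equation 8: the KL divergence from `Dir(α)` to the uniform Dirichlet
`Dir(1, …, 1)` equals
`log (Γ(∑_k α k) / (Γ(K) ∏_k Γ(α k))) + ∑_k (α k − 1) (ψ(α k) − ψ(∑_j α j))`. -/
theorem dirichlet_kl_to_uniform (K : ℕ) (hK : 2 ≤ K)
    (α : Fin K → ℝ) (hα : ∀ k, 0 < α k) :
    ∫ x in simplexDomain K,
        dirDensity K α x * Real.log (dirDensity K α x / dirDensity K (fun _ => 1) x) =
      Real.log (Real.Gamma (∑ k, α k) / (Real.Gamma K * ∏ k, Real.Gamma (α k))) +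
        ∑ k, (α k - 1) * (digamma (α k) - digamma (∑ j, α j)) := by
  obtain ⟨n, rfl⟩ : ∃ n, K = n + 1 := ⟨K - 1, by omega⟩
  have hΓsum : 0 < Real.Gamma (∑ k, α k) :=
    Real.Gamma_pos_of_pos (Finset.sum_pos (fun k _ => hα k) Finset.univ_nonempty)
  have hΓprod : 0 < ∏ k, Real.Gamma (α k) :=
    Finset.prod_pos fun k _ => Real.Gamma_pos_of_pos (hα k)
  set Cα : ℝ := Real.Gamma (∑ k, α k) / ∏ k, Real.Gamma (α k) with hCα
  have hCαpos : 0 < Cα := div_pos hΓsum hΓprod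
  set Bv : ℝ := (∏ k, Real.Gamma (α k)) / Real.Gamma (∑ k, α k) with hBv
  have hBvpos : 0 < Bv := Bpos hα
  have hCB : Cα * Bv = 1 := by
    rw [hCα, hBv]
    field_simp
  have hΓK : 0 < Real.Gamma ((n+1 : ℕ) : ℝ) :=
    Real.Gamma_pos_of_pos (by positivity)
  have huni : ∀ x : Fin n → ℝ, dirDensity (n+1) (fun _ => 1) x
      = Real.Gamma ((n+1 : ℕ) : ℝ) := by
    intro x
    unfold dirDensity
    have h1 : (∑ _k : Fin (n+1), (1:ℝ)) = ((n+1 : ℕ) : ℝ) := by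
      simp
    have h2 : (∏ _k : Fin (n+1), Real.Gamma 1) = 1 := by
      simp [Real.Gamma_one]
    rw [h1, h2]
    simp [Real.rpow_zero]
  set g : (Fin n → ℝ) → ℝ := fun x =>
    (Cα * Real.log (Cα / Real.Gamma ((n+1 : ℕ) : ℝ))) * P n α x +
      ∑ j, ((Cα * (α j - 1)) * (P n α x * Real.log (dirMu (n+1) j x))) with hg
  have hint_P := integrableOn_P n α hα
  have hint_log := fun j => P_mul_log n α hα j
  have hint_g : IntegrableOn g (S n) volume := by
    refine Integrable.add (hint_P.const_mul _) ?_
    exact integrable_finset_sum _ fun j _ => ((hint_log j).1).const_mul _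
  -- a.e. equality of the integrand with g
  set f₀ : (Fin n → ℝ) → ℝ := fun x => dirDensity (n+1) α x *
    Real.log (dirDensity (n+1) α x / dirDensity (n+1) (fun _ => 1) x) with hf₀
  have hae : ∀ᵐ x ∂(volume.restrict (S n)), f₀ x = g x := by
    filter_upwards [ae_restrict_mem (measurableSet_S n),
      ae_restrict_of_ae (measure_eq_zero_iff_ae_notMem.mp (volume_Z n))] with x hx hz
    have hd : dirDensity (n+1) α x = Cα * P n α x := rfl
    have hPpos : 0 < P n α x :=
      Finset.prod_pos fun j _ => Real.rpow_pos_of_pos (dirMu_pos hx hz j) _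
    have hlogP : Real.log (P n α x) = ∑ j, (α j - 1) * Real.log (dirMu (n+1) j x) := by
      unfold P
      rw [Real.log_prod (fun j _ =>
        (Real.rpow_pos_of_pos (dirMu_pos hx hz j) _).ne')]
      exact Finset.sum_congr rfl fun j _ => Real.log_rpow (dirMu_pos hx hz j) _
    have hsum2 : ∑ j, (Cα * (α j - 1)) * (P n α x * Real.log (dirMu (n+1) j x))
        = Cα * P n α x * (∑ j, (α j - 1) * Real.log (dirMu (n+1) j x)) := by
      rw [Finset.mul_sum]
      exact Finset.sum_congr rfl fun j _ => by ring
    rw [hf₀]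
    simp only []
    rw [hd, huni x, Real.log_div (by positivity) hΓK.ne',
      Real.log_mul hCαpos.ne' hPpos.ne', hlogP, hg]
    simp only []
    rw [hsum2, Real.log_div hCαpos.ne' hΓK.ne']
    ring
  have hmain : (∫ x in S n, f₀ x)
      = Real.log (Real.Gamma (∑ k, α k) /
          (Real.Gamma ((n+1 : ℕ) : ℝ) * ∏ k, Real.Gamma (α k))) +
        ∑ k, (α k - 1) * (digamma (α k) - digamma (∑ j, α j)) := by
    rw [integral_congr_ae hae]
    have hsplit : ∫ x in S n, g x
        = (Cα * Real.log (Cα / Real.Gamma ((n+1 : ℕ) : ℝ))) * (∫ x in S n, P n α x) +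
          ∑ j, ((Cα * (α j - 1)) * ∫ x in S n,
            P n α x * Real.log (dirMu (n+1) j x)) := by
      rw [hg]
      rw [integral_add (hint_P.const_mul _)
        (integrable_finset_sum _ fun j _ => ((hint_log j).1).const_mul _)]
      rw [MeasureTheory.integral_const_mul]
      congr 1
      rw [integral_finset_sum _ fun j _ => ((hint_log j).1).const_mul _]
      exact Finset.sum_congr rfl fun j _ => MeasureTheory.integral_const_mul _ _
    rw [hsplit, setIntegral_P n α hα]
    have hlog_eq : ∀ j : Fin (n+1), ∫ x in S n, P n α x * Real.log (dirMu (n+1) j x)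
        = Bv * (digamma (α j) - digamma (∑ i, α i)) := fun j => (P_mul_log n α hα j).2
    have hsumrw : (∑ j, Cα * (α j - 1) * ∫ x in S n, P n α x * Real.log (dirMu (n+1) j x))
        = ∑ j, Cα * (α j - 1) * (Bv * (digamma (α j) - digamma (∑ i, α i))) :=
      Finset.sum_congr rfl fun j _ => by rw [hlog_eq j]
    rw [hsumrw]
    have harg : Cα / Real.Gamma ((n+1 : ℕ) : ℝ)
        = Real.Gamma (∑ k, α k) / (Real.Gamma ((n+1 : ℕ) : ℝ) * ∏ k, Real.Gamma (α k)) := by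
      rw [hCα, div_div, mul_comm]
    calc Cα * Real.log (Cα / Real.Gamma ((n+1 : ℕ) : ℝ)) *
          ((∏ k, Real.Gamma (α k)) / Real.Gamma (∑ k, α k)) +
        ∑ j, Cα * (α j - 1) * (Bv * (digamma (α j) - digamma (∑ i, α i)))
        = Real.log (Cα / Real.Gamma ((n+1 : ℕ) : ℝ)) * (Cα * Bv) +
          ∑ j, (α j - 1) * (digamma (α j) - digamma (∑ i, α i)) * (Cα * Bv) := by
          rw [← hBv]
          congr 1
          · ring
          · exact Finset.sum_congr rfl fun j _ => by ring
      _ = Real.log (Real.Gamma (∑ k, α k) /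
            (Real.Gamma ((n+1 : ℕ) : ℝ) * ∏ k, Real.Gamma (α k))) +
          ∑ j, (α j - 1) * (digamma (α j) - digamma (∑ i, α i)) := by
          rw [hCB, harg]
          simp [mul_one]
  exact hmain
end
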